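/- For every finite tree-like n-model T there is a unique node T_w of the n-universal model T(n) with T ≡ T_w (there are monotonic maps both from T into T_w and from T_w into T); consequently T and T_w satisfy the same MR-formulas at their roots. -/

import Mathlib

/-! ## Formulas of intuitionistic propositional logic -/

inductive Formula : Type
  | bot : Formula
  | var : ℕ → Formula
  | and : Formula → Formula → Formula
  | or  : Formula → Formula → Formula
  | imp : Formula → Formula → Formula
  deriving DecidableEq

namespace Formula

def top : Formula := imp bot bot

def iff_ (φ ψ : Formula) : Formula := and (imp φ ψ) (imp ψ φ)

/-- `φ` contains no implication at all. -/
def noImp : Formula → Prop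
  | bot => True
  | var _ => True
  | and φ ψ => noImp φ ∧ noImp ψ
  | or φ ψ => noImp φ ∧ noImp ψ
  | imp _ _ => False

/-- NNIL-formulas: no nesting of implications to the left. -/
def IsNNIL : Formula → Prop
  | bot => True
  | var _ => True
  | and φ ψ => IsNNIL φ ∧ IsNNIL ψ
  | or φ ψ => IsNNIL φ ∧ IsNNIL ψ
  | imp φ ψ => noImp φ ∧ IsNNIL ψ

/-- `φ` is an `n`-formula: all its propositional variables are among `p_0, …, p_{n-1}`. -/
def varsBelow (n : ℕ) : Formula → Prop
  | bot => True
  | var p => p < n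
  | and φ ψ => varsBelow n φ ∧ varsBelow n ψ
  | or φ ψ => varsBelow n φ ∧ varsBelow n ψ
  | imp φ ψ => varsBelow n φ ∧ varsBelow n ψ

/-- the propositional variable `p` occurs in the formula -/
def occurs (p : ℕ) : Formula → Prop
  | bot => False
  | var q => q = p
  | and φ ψ => occurs p φ ∨ occurs p ψ
  | or φ ψ => occurs p φ ∨ occurs p ψ
  | imp φ ψ => occurs p φ ∨ occurs p ψ

/-- uniform substitution -/
def subst (σ : ℕ → Formula) : Formula → Formula
  | bot => bot
  | var p => σ p
  | and φ ψ => and (subst σ φ) (subst σ ψ)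
  | or φ ψ => or (subst σ φ) (subst σ ψ)
  | imp φ ψ => imp (subst σ φ) (subst σ ψ)

end Formula

/-- finite conjunction (empty conjunction is ⊤) -/
def listAnd : List Formula → Formula
  | [] => Formula.top
  | φ :: l => Formula.and φ (listAnd l)

/-- finite disjunction (empty disjunction is ⊥) -/
def listOr : List Formula → Formula
  | [] => Formula.bot
  | φ :: l => Formula.or φ (listOr l)

/-! ## Kripke structures, models and satisfaction -/

/-- raw Kripke structure: worlds, relation, Boolean valuation -/
structure KStruct where
  W : Type
  R : W → W → Prop
  V : W → ℕ → Bool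

namespace KStruct

/-- a Kripke model: `R` is a partial order and `V` is persistent -/
def IsModel (M : KStruct) : Prop :=
  (∀ w, M.R w w) ∧
  (∀ w u v, M.R w u → M.R u v → M.R w v) ∧
  (∀ w u, M.R w u → M.R u w → w = u) ∧
  (∀ w u p, M.R w u → M.V w p = true → M.V u p = true)

/-- an `n`-model: a Kripke model whose valuation is restricted to the variables `p_0,…,p_{n-1}` -/
def IsNModel (M : KStruct) (n : ℕ) : Prop :=
  M.IsModel ∧ ∀ w p, n ≤ p → M.V w p = false

/-- intuitionistic satisfaction -/
def sat (M : KStruct) : M.W → Formula → Prop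
  | _, Formula.bot => False
  | w, Formula.var p => M.V w p = true
  | w, Formula.and φ ψ => M.sat w φ ∧ M.sat w ψ
  | w, Formula.or φ ψ => M.sat w φ ∨ M.sat w ψ
  | w, Formula.imp φ ψ => ∀ u, M.R w u → M.sat u φ → M.sat u ψ

/-- the submodel on a subset of the worlds -/
def restrict (M : KStruct) (S : Set M.W) : KStruct where
  W := S
  R := fun a b => M.R a.1 b.1
  V := fun a p => M.V a.1 p

end KStruct

/-- monotonic map between Kripke structures: preserves the order and the colors -/
def Monotonic (M N : KStruct) (f : M.W → N.W) : Prop :=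
  (∀ w u, M.R w u → N.R (f w) (f u)) ∧ (∀ w p, N.V (f w) p = M.V w p)

/-- p-morphism: a monotonic map satisfying the forth condition -/
def PMorphism (M N : KStruct) (f : M.W → N.W) : Prop :=
  Monotonic M N f ∧ ∀ w u', N.R (f w) u' → ∃ u, M.R w u ∧ f u = u'

/-- MR: the class of formulas reflected by monotonic maps between Kripke models -/
def MR (φ : Formula) : Prop :=
  ∀ (N M : KStruct), N.IsModel → M.IsModel →
    ∀ f : N.W → M.W, Monotonic N M f → ∀ w : N.W, M.sat (f w) φ → N.sat w φ

/-- `r` is a root of `M` -/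
def IsRoot (M : KStruct) (r : M.W) : Prop := ∀ w, M.R r w

/-- `M` is tree-like with root `r`: rooted, and each point has a finite,
linearly ordered set of predecessors -/
def IsTree (M : KStruct) (r : M.W) : Prop :=
  IsRoot M r ∧ (∀ w : M.W, {u | M.R u w}.Finite) ∧
  (∀ w u v : M.W, M.R u w → M.R v w → (M.R u v ∨ M.R v u))

/-- `u` is an immediate (proper) successor of `w` -/
def ImmSucc (M : KStruct) (w u : M.W) : Prop :=
  M.R w u ∧ w ≠ u ∧ ∀ v, M.R w v → M.R v u → v = w ∨ v = u

/-- `S` carries a color-preserving submodel of `M` -/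
def ColorPresSub (M : KStruct) (S : Set M.W) : Prop :=
  ∀ w ∈ S, ∀ u, M.R w u → ∃ v ∈ S, M.R w v ∧ ∀ p, M.V v p = M.V u p

/-! ## The β-formulas of finite models -/

/-- the variables among `p_0,…,p_{n-1}` true at `w` -/
def propList (M : KStruct) (n : ℕ) (w : M.W) : List Formula :=
  ((List.range n).filter (fun p => M.V w p)).map Formula.var

/-- the variables among `p_0,…,p_{n-1}` false at `w` -/
def notpropList (M : KStruct) (n : ℕ) (w : M.W) : List Formula :=
  ((List.range n).filter (fun p => !(M.V w p))).map Formula.var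

open Classical in
/-- the immediate successors of `w`, as a list -/
noncomputable def immSuccList (M : KStruct) [Fintype M.W] (w : M.W) : List M.W :=
  (Finset.univ.filter (fun u => ImmSucc M w u)).toList

/-- β(w), defined by recursion on the depth of `w` (computed with enough fuel):
`β(w) = ⋀prop(w) → (⋁notprop(w) ∨ β(w_1) ∨ … ∨ β(w_k))` where the `w_i` are the
immediate successors of `w` (for maximal `w` the last disjunct is the empty disjunction). -/
noncomputable def betaFuel (M : KStruct) [Fintype M.W] (n : ℕ) : ℕ → M.W → Formula
  | 0, _ => Formula.bot
  | (k+1), w =>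
      Formula.imp (listAnd (propList M n w))
        (listOr (notpropList M n w ++ (immSuccList M w).map (fun u => betaFuel M n k u)))

/-- β(w) for a point `w` of a finite `n`-model: `Fintype.card M.W` is an upper bound
for the depth of any point, so the recursion above never runs out of fuel. -/
noncomputable def beta (M : KStruct) [inst : Fintype M.W] (n : ℕ) (w : M.W) : Formula :=
  betaFuel M n (Fintype.card M.W) w

/-! ## Unravelings -/

/-- the unraveling `T_N` of a rooted model `(N, r)`: points are the finite sequences
`⟨r, w_1, …, w_k⟩` in which each entry is an immediate successor of the preceding one,
ordered by the initial-segment relation; such a sequence satisfies the same variables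
as its last entry. -/
def Unravel (M : KStruct) (r : M.W) : KStruct where
  W := {l : List M.W // l.head? = some r ∧ List.Chain' (ImmSucc M) l}
  R := fun σ τ => σ.1 <+: τ.1
  V := fun σ p => (σ.1.getLast?.map (fun w => M.V w p)).getD false

/-! ## Kripke frames -/

structure KFrame where
  W : Type
  R : W → W → Prop

namespace KFrame

/-- a Kripke frame: `R` is a partial order -/
def IsFrame (F : KFrame) : Prop :=
  (∀ w, F.R w w) ∧ (∀ w u v, F.R w u → F.R u v → F.R w v) ∧
  (∀ w u, F.R w u → F.R u w → w = u)

def Persistent (F : KFrame) (V : F.W → ℕ → Bool) : Prop :=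
  ∀ w u p, F.R w u → V w p = true → V u p = true

/-- the model on `F` given by a valuation -/
def model (F : KFrame) (V : F.W → ℕ → Bool) : KStruct := ⟨F.W, F.R, V⟩

/-- `F ⊨ φ` : `φ` is true at every point of every model on `F` -/
def valid (F : KFrame) (φ : Formula) : Prop :=
  ∀ V, F.Persistent V → ∀ w, (F.model V).sat w φ

/-- the substructure of `F` on a subset `S` of its domain, with the restricted order -/
def restrictF (F : KFrame) (S : Set F.W) : KFrame :=
  ⟨S, fun a b => F.R a.1 b.1⟩

end KFrame

/-- a monotonic map from a model `N` into a frame `F` which is color-consistent: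
`f(w) R f(u)` implies `col(w) ≤ col(u)` -/
def ColorConsistentMap (N : KStruct) (F : KFrame) (f : N.W → F.W) : Prop :=
  (∀ w u, N.R w u → F.R (f w) (f u)) ∧
  (∀ w u, F.R (f w) (f u) → ∀ p, N.V w p = true → N.V u p = true)


/-! ## The n-universal model 𝒯(n) for NNIL -/

/-- an `n`-color -/
abbrev Col (n : ℕ) := Fin n → Bool

/-- componentwise order on colors -/
def ColLE {n : ℕ} (c d : Col n) : Prop := ∀ i, c i = true → d i = true

def ColLT {n : ℕ} (c d : Col n) : Prop := ColLE c d ∧ c ≠ d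

/-- finite colored trees: a root color together with the list of subtrees
hanging above the root -/
inductive CTree (n : ℕ) : Type
  | node : Col n → List (CTree n) → CTree n

namespace CTree

variable {n : ℕ}

def color : CTree n → Col n
  | node c _ => c

def children : CTree n → List (CTree n)
  | node _ ts => ts

/-- the subtree of `t` at a position (a list of child indices) -/
def subt : List ℕ → CTree n → Option (CTree n)
  | [], t => some t
  | i :: l, t => (t.children[i]?).bind (subt l)

/-- the finite tree-like `n`-model determined by a colored tree: its worlds are
the positions of `t`, ordered by the initial-segment relation, and a position
satisfies `p_i` iff the color of the subtree there is `1` at `i`. -/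
def toModel (t : CTree n) : KStruct where
  W := {l : List ℕ // (subt l t).isSome = true}
  R := fun a b => a.1 <+: b.1
  V := fun a p =>
    if h : p < n then ((subt a.1 t).map (fun s => s.color ⟨p, h⟩)).getD false
    else false

/-- the root of the model of a tree -/
def root (t : CTree n) : t.toModel.W := ⟨[], rfl⟩

/-- an injective code of colors -/
def colCode (c : Col n) : ℕ := ∑ i : Fin n, (if c i then 2 ^ (i : ℕ) else 0)

/-- an injective code of lists of numbers -/
def listCode : List ℕ → ℕ
  | [] => 0
  | a :: l => Nat.pair a (listCode l) + 1

/-- an injective code of colored trees, used to order the children of every node of a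
tree in the universal model canonically -/
def code : CTree n → ℕ
  | node c ts => Nat.pair (colCode c) (listCode (ts.attach.map (fun x => code x.1)))
decreasing_by
  have := List.sizeOf_lt_of_mem x.2
  simp only [CTree.node.sizeOf_spec]
  omega

end CTree

/-- `MLE s t` (`s ≤ t`): there is a monotonic map from (the model of) `t` into `s` -/
def MLE {n : ℕ} (s t : CTree n) : Prop :=
  ∃ f : t.toModel.W → s.toModel.W, Monotonic t.toModel s.toModel f

/-- membership in the domain of the universal model `𝒯(n)`, built in layers:
layer 1 consists of the one-point trees (one for each color); a tree of a later layer
is built from a set `X` of pairwise `≤`-incomparable trees of earlier layers (encoded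
as a list sorted canonically by `code`) by adding a fresh root below whose color is
strictly smaller than every color occurring in the trees of `X`. -/
inductive UMem : {n : ℕ} → CTree n → Prop
  | single {n : ℕ} (c : Col n) : UMem (CTree.node c [])
  | step {n : ℕ} (c : Col n) (ts : List (CTree n)) :
      ts ≠ [] →
      (∀ t ∈ ts, UMem t) →
      List.Chain' (fun a b => CTree.code a < CTree.code b) ts →
      (∀ t ∈ ts, ∀ s ∈ ts, t ≠ s → ¬ MLE t s) →
      (∀ t ∈ ts, ∀ (l : List ℕ) (s : CTree n), CTree.subt l t = some s →
        ColLT c s.color) →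
      UMem (CTree.node c ts)

/-- the universal model `𝒯(n)`: its points are the trees in `UMem`, ordered by `≤`
(where `T_w ≤ T_u` iff there is a monotonic map from `T_u` into `T_w`), and the color
of a node is the color of the root of the corresponding tree. -/
def UnivModel (n : ℕ) : KStruct where
  W := {t : CTree n // UMem t}
  R := fun a b => MLE a.1 b.1
  V := fun a p => if h : p < n then a.1.color ⟨p, h⟩ else false

/-- mutual monotonic mappability (`≡`) of Kripke structures -/
def MEquiv (A B : KStruct) : Prop :=
  (∃ f : B.W → A.W, Monotonic B A f) ∧ (∃ g : A.W → B.W, Monotonic A B g)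

/-! ### Basic machinery on tree positions -/

namespace CTree

variable {n : ℕ}

@[simp] lemma color_node (c : Col n) (ts : List (CTree n)) : (node c ts).color = c := rfl
@[simp] lemma children_node (c : Col n) (ts : List (CTree n)) : (node c ts).children = ts := rfl

lemma eta (t : CTree n) : t = node t.color t.children := by cases t; rfl

@[simp] lemma subt_nil (t : CTree n) : subt [] t = some t := rfl

lemma subt_cons (i : ℕ) (l : List ℕ) (c : Col n) (ts : List (CTree n)) :
    subt (i :: l) (node c ts) = (ts[i]?).bind (subt l) := rfl

/-- `l` is a position of `t` -/
def Pos (t : CTree n) (l : List ℕ) : Prop := (subt l t).isSome = true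

lemma pos_nil (t : CTree n) : t.Pos [] := rfl

lemma pos_cons {c : Col n} {ts : List (CTree n)} {i : ℕ} {l : List ℕ} :
    (node c ts).Pos (i :: l) ↔ ∃ u, ts[i]? = some u ∧ u.Pos l := by
  unfold Pos
  rw [subt_cons]
  cases h : ts[i]? with
  | none => simp
  | some u => simp [h, Pos]

lemma subt_cons_eq {c : Col n} {ts : List (CTree n)} {i : ℕ} {u : CTree n}
    (h : ts[i]? = some u) (l : List ℕ) :
    subt (i :: l) (node c ts) = subt l u := by
  rw [subt_cons, h]; rfl

/-- the color of the subtree of `t` at position `l` -/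
noncomputable def colAt (t : CTree n) (l : List ℕ) (h : t.Pos l) : Col n :=
  ((subt l t).get h).color

lemma colAt_nil (t : CTree n) (h : t.Pos []) : colAt t [] h = t.color := rfl

lemma colAt_congr {t u : CTree n} {l m : List ℕ} (hl : t.Pos l) (hm : u.Pos m)
    (h : subt l t = subt m u) : colAt t l hl = colAt u m hm := by
  unfold colAt
  have : (subt l t).get hl = (subt m u).get hm := by
    apply Option.some_injective
    exact (Option.some_get (x := subt l t) hl).trans (h.trans (Option.some_get (x := subt m u) hm).symm)
  rw [this]

lemma toModel_V_eq (t : CTree n) (w : t.toModel.W) (p : ℕ) :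
    t.toModel.V w p = if h : p < n then colAt t w.1 w.2 ⟨p, h⟩ else false := by
  show (if h : p < n then ((subt w.1 t).map (fun s => s.color ⟨p, h⟩)).getD false
    else false) = _
  split
  · next h =>
    have := w.2
    unfold Pos at this
    cases hs : subt w.1 t with
    | none => rw [hs] at this; simp at this
    | some s => simp [hs, colAt, Pos]
  · rfl

end CTree

open CTree

variable {n : ℕ}

/-- there is a monotonic map from `s` into `t` -/
def Emb (s t : CTree n) : Prop :=
  ∃ f : s.toModel.W → t.toModel.W, Monotonic s.toModel t.toModel f

lemma mle_iff_emb (s t : CTree n) : MLE s t ↔ Emb t s := Iff.rfl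

/-- there is a monotonic map from `s` into `t` sending root to root -/
def REmb (s t : CTree n) : Prop :=
  ∃ f : s.toModel.W → t.toModel.W, Monotonic s.toModel t.toModel f ∧ f s.root = t.root

lemma REmb.emb {s t : CTree n} (h : REmb s t) : Emb s t := ⟨h.choose, h.choose_spec.1⟩

lemma Emb.refl (t : CTree n) : Emb t t := ⟨id, fun _ _ h => h, fun _ _ => rfl⟩

lemma REmb.refl (t : CTree n) : REmb t t := ⟨id, ⟨fun _ _ h => h, fun _ _ => rfl⟩, rfl⟩

lemma Monotonic.comp {A B C : KStruct} {f : A.W → B.W} {g : B.W → C.W}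
    (hf : Monotonic A B f) (hg : Monotonic B C g) : Monotonic A C (g ∘ f) :=
  ⟨fun w u h => hg.1 _ _ (hf.1 w u h), fun w p => (hg.2 (f w) p).trans (hf.2 w p)⟩

lemma Emb.trans {s t u : CTree n} (h1 : Emb s t) (h2 : Emb t u) : Emb s u := by
  obtain ⟨f, hf⟩ := h1; obtain ⟨g, hg⟩ := h2
  exact ⟨g ∘ f, hf.comp hg⟩

lemma REmb.trans {s t u : CTree n} (h1 : REmb s t) (h2 : REmb t u) : REmb s u := by
  obtain ⟨f, hf, hfr⟩ := h1; obtain ⟨g, hg, hgr⟩ := h2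
  exact ⟨g ∘ f, hf.comp hg, by simp [Function.comp, hfr, hgr]⟩

/-- color preservation of monotonic maps between tree models -/
lemma colAt_of_mono {s t : CTree n} {f : s.toModel.W → t.toModel.W}
    (hf : Monotonic s.toModel t.toModel f) (w : s.toModel.W) :
    colAt t (f w).1 (f w).2 = colAt s w.1 w.2 := by
  funext i
  have := hf.2 w i.1
  rw [toModel_V_eq, toModel_V_eq, dif_pos i.2, dif_pos i.2] at this
  rw [Fin.eta] at this
  exact this

namespace CTree

lemma pos_cons_lt {c : Col n} {ts : List (CTree n)} {i : ℕ} {l : List ℕ}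
    (h : (node c ts).Pos (i :: l)) : i < ts.length := by
  obtain ⟨u, hu, _⟩ := pos_cons.mp h
  exact (List.getElem?_eq_some_iff.mp hu).1

lemma pos_cons_pos {c : Col n} {ts : List (CTree n)} {i : ℕ} {l : List ℕ}
    (h : (node c ts).Pos (i :: l)) : (ts[i]'(pos_cons_lt h)).Pos l := by
  obtain ⟨u, hu, hl⟩ := pos_cons.mp h
  have : ts[i]'(pos_cons_lt h) = u := by
    have := List.getElem?_eq_getElem (pos_cons_lt h)
    rw [this] at hu; exact Option.some_injective _ hu
  rw [this]; exact hl

lemma pos_cons_of {c : Col n} {ts : List (CTree n)} {i : ℕ} {l : List ℕ}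
    (hi : i < ts.length) (hl : (ts[i]'hi).Pos l) : (node c ts).Pos (i :: l) :=
  pos_cons.mpr ⟨ts[i]'hi, List.getElem?_eq_getElem hi, hl⟩

lemma V_pos_cons {c : Col n} {ts : List (CTree n)} {i : ℕ} {l : List ℕ}
    (hi : i < ts.length) (hl : (ts[i]'hi).Pos l) (hw : (node c ts).Pos (i :: l)) (p : ℕ) :
    (node c ts).toModel.V ⟨i :: l, hw⟩ p = (ts[i]'hi).toModel.V ⟨l, hl⟩ p := by
  rw [toModel_V_eq (node c ts) ⟨i :: l, hw⟩ p, toModel_V_eq (ts[i]'hi) ⟨l, hl⟩ p]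
  split
  · exact congrFun (colAt_congr _ _ (subt_cons_eq (List.getElem?_eq_getElem hi) l)) _
  · rfl

lemma V_root (t : CTree n) (h : t.Pos []) (p : ℕ) :
    t.toModel.V ⟨[], h⟩ p = if hp : p < n then t.color ⟨p, hp⟩ else false := rfl

end CTree

lemma embChild {c : Col n} {ts : List (CTree n)} {u : CTree n} (hu : u ∈ ts) :
    Emb u (node c ts) := by
  obtain ⟨i, hi, rfl⟩ := List.getElem_of_mem hu
  refine ⟨fun w => ⟨i :: w.1, pos_cons_of hi w.2⟩, ?_, ?_⟩
  · intro w v h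
    exact List.cons_prefix_cons.mpr ⟨rfl, h⟩
  · intro w p
    exact V_pos_cons hi w.2 _ p

/-- the glue map: joins maps from the children of `us` into `node c ts`,
sending the root to the root -/
noncomputable def glueFun (c : Col n) (us ts : List (CTree n))
    (F : ∀ u ∈ us, u.toModel.W → (CTree.node c ts).toModel.W) :
    (CTree.node c us).toModel.W → (CTree.node c ts).toModel.W
  | ⟨[], _⟩ => (CTree.node c ts).root
  | ⟨i :: l, hw⟩ =>
      F (us[i]'(pos_cons_lt hw)) (List.getElem_mem _) ⟨l, pos_cons_pos hw⟩

lemma embGlue {c : Col n} {us ts : List (CTree n)}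
    (h : ∀ u ∈ us, Emb u (CTree.node c ts)) : REmb (CTree.node c us) (CTree.node c ts) := by
  choose F hF using h
  refine ⟨glueFun c us ts F, ⟨?_, ?_⟩, rfl⟩
  · rintro ⟨l1, h1⟩ ⟨l2, h2⟩ hR
    match l1, h1, l2, h2, hR with
    | [], h1, l2, h2, _ => exact List.nil_prefix
    | i :: l1, h1, j :: l2, h2, hR =>
      obtain ⟨rfl, hpre⟩ := List.cons_prefix_cons.mp hR
      show ((CTree.node c ts).toModel.R (F _ _ ⟨l1, _⟩) (F _ _ ⟨l2, _⟩))
      exact (hF _ _).1 ⟨l1, pos_cons_pos h1⟩ ⟨l2, pos_cons_pos h2⟩ hpre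
  · rintro ⟨l, hl⟩ p
    match l, hl with
    | [], hl => rfl
    | i :: l, hl =>
      show (CTree.node c ts).toModel.V (F _ _ ⟨l, _⟩) p = _
      rw [(hF _ _).2 ⟨l, pos_cons_pos hl⟩ p, V_pos_cons (pos_cons_lt hl) (pos_cons_pos hl) hl p]

/-! ### Color order -/

lemma ColLE.refl (c : Col n) : ColLE c c := fun _ h => h
lemma ColLE.trans {a b c : Col n} (h1 : ColLE a b) (h2 : ColLE b c) : ColLE a c :=
  fun i h => h2 i (h1 i h)
lemma ColLE.antisymm {a b : Col n} (h1 : ColLE a b) (h2 : ColLE b a) : a = b := by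
  funext i
  cases ha : a i <;> cases hb : b i
  · rfl
  · exact (Bool.false_ne_true (ha ▸ h2 i hb)).elim
  · exact (Bool.false_ne_true (hb ▸ h1 i ha)).elim
  · rfl
lemma ColLT.irrefl {c : Col n} (h : ColLT c c) : False := h.2 rfl
lemma ColLE.trans_lt {a b c : Col n} (h1 : ColLE a b) (h2 : ColLT b c) : ColLT a c := by
  refine ⟨h1.trans h2.1, fun he => ?_⟩
  exact h2.2 (ColLE.antisymm h2.1 (he ▸ h1))
lemma ColLT.trans_le {a b c : Col n} (h1 : ColLT a b) (h2 : ColLE b c) : ColLT a c := by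
  refine ⟨h1.1.trans h2, fun he => ?_⟩
  exact h1.2 (ColLE.antisymm h1.1 (he ▸ h2))

/-! ### UMem inversion -/

namespace UMem

lemma children_mem {c : Col n} {ts : List (CTree n)} (h : UMem (CTree.node c ts)) :
    ∀ t ∈ ts, UMem t := by
  cases h with
  | single => intro t ht; simp at ht
  | step _ _ _ h2 => exact h2

lemma chain {c : Col n} {ts : List (CTree n)} (h : UMem (CTree.node c ts)) :
    List.Chain' (fun a b => CTree.code a < CTree.code b) ts := by
  cases h with
  | single => exact List.isChain_nil
  | step _ _ _ _ h3 => exact h3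

lemma antichain {c : Col n} {ts : List (CTree n)} (h : UMem (CTree.node c ts)) :
    ∀ t ∈ ts, ∀ s ∈ ts, t ≠ s → ¬ MLE t s := by
  cases h with
  | single => intro t ht; simp at ht
  | step _ _ _ _ _ h4 => exact h4

lemma colLT {c : Col n} {ts : List (CTree n)} (h : UMem (CTree.node c ts)) :
    ∀ t ∈ ts, ∀ (l : List ℕ) (s : CTree n), CTree.subt l t = some s → ColLT c s.color := by
  cases h with
  | single => intro t ht; simp at ht
  | step _ _ _ _ _ _ h5 => exact h5

end UMem

namespace CTree

lemma colAt_strict {t : CTree n} (ht : UMem t) {l : List ℕ} (hl : t.Pos l) (hne : l ≠ []) :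
    ColLT t.color (colAt t l hl) := by
  obtain ⟨c, ts⟩ := t
  match l, hl with
  | i :: l', hl =>
    have hi := pos_cons_lt hl
    have hp := pos_cons_pos hl
    have hsub : subt (i :: l') (node c ts) = subt l' (ts[i]'hi) :=
      subt_cons_eq (List.getElem?_eq_getElem hi) l'
    have : colAt (node c ts) (i :: l') hl = colAt (ts[i]'hi) l' hp := colAt_congr _ _ hsub
    rw [this]
    have hmem : ts[i]'hi ∈ ts := List.getElem_mem _
    have := ht.colLT (ts[i]'hi) hmem l' ((subt l' (ts[i]'hi)).get hp) (Option.some_get hp).symm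
    exact this

lemma colAt_le {t : CTree n} (ht : UMem t) {l : List ℕ} (hl : t.Pos l) (hne : l ≠ []) :
    ColLE t.color (colAt t l hl) := (colAt_strict ht hl hne).1

/-- monotonicity of colors along the order, for trees in the universal model -/
lemma colAt_mono {t : CTree n} :
    UMem t → ∀ (l m : List ℕ) (hl : t.Pos l) (hm : t.Pos (l ++ m)),
      ColLE (colAt t l hl) (colAt t (l ++ m) hm) := by
  induction t using CTree.rec (motive_2 := fun ts => ∀ t ∈ ts, UMem t →
      ∀ (l m : List ℕ) (hl : t.Pos l) (hm : t.Pos (l ++ m)),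
      ColLE (colAt t l hl) (colAt t (l ++ m) hm)) with
  | node c ts ih =>
    intro ht l m hl hm
    match l, hl, hm with
    | [], _, hm =>
      match m with
      | [] => exact ColLE.refl _
      | x :: m' => exact colAt_le ht hm (by simp)
    | i :: l', hl, hm =>
      have hi := pos_cons_lt hl
      have hsub := subt_cons_eq (l := l') (List.getElem?_eq_getElem hi) (c := c)
      have hsub2 := subt_cons_eq (l := l' ++ m) (List.getElem?_eq_getElem hi) (c := c)
      rw [colAt_congr hl (pos_cons_pos hl) hsub,
        colAt_congr hm (pos_cons_pos hm) hsub2]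
      exact ih (ts[i]'hi) (List.getElem_mem _) (ht.children_mem _ (List.getElem_mem _))
        l' m _ _
  | nil =>
    rename_i t htmem hu l m hl hm
    exact absurd htmem List.not_mem_nil
  | cons a as iha ihas =>
    rename_i t htmem hu l m hl hm
    rcases List.mem_cons.mp htmem with rfl | hmem
    · exact iha hu l m hl hm
    · exact ihas t hmem hu l m hl hm

/-- the model of a universal-model tree is a Kripke model -/
lemma toModel_isModel {t : CTree n} (ht : UMem t) : t.toModel.IsModel := by
  refine ⟨fun w => List.prefix_refl _, fun w u v h1 h2 => h1.trans h2, ?_, ?_⟩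
  · intro w u h1 h2
    exact Subtype.ext (h1.eq_of_length (Nat.le_antisymm h1.length_le h2.length_le))
  · intro w u p h hV
    obtain ⟨m, hm⟩ := h
    rw [toModel_V_eq] at hV ⊢
    split at hV
    · next hp =>
      rw [dif_pos hp]
      have := colAt_mono ht w.1 m w.2 (by rw [hm]; exact u.2) ⟨p, hp⟩ hV
      convert this using 2
      · exact congrFun (colAt_congr _ _ (by rw [hm])) _
    · exact absurd hV (by simp)

lemma toModel_isNModel {t : CTree n} (ht : UMem t) : t.toModel.IsNModel n := by
  refine ⟨toModel_isModel ht, fun w p hp => ?_⟩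
  rw [toModel_V_eq, dif_neg (by omega)]

end CTree

/-! ### Decomposition of monotonic maps between universal trees -/

open CTree

lemma colAt_eq_color_of_nil {t : CTree n} {w : t.toModel.W} (h : w.1 = []) :
    colAt t w.1 w.2 = t.color := by
  rw [colAt_congr w.2 (pos_nil t) (by rw [h])]
  rfl

lemma emb_colLE {s t : CTree n} (ht : UMem t) (h : Emb s t) : ColLE t.color s.color := by
  obtain ⟨f, hf⟩ := h
  have hc : colAt t (f s.root).1 (f s.root).2 = s.color := colAt_of_mono hf s.root
  by_cases hnil : (f s.root).1 = []
  · rw [colAt_eq_color_of_nil hnil] at hc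
    rw [hc]; exact ColLE.refl _
  · have := colAt_strict ht (f s.root).2 hnil
    rw [hc] at this
    exact this.1

lemma emb_color_eq {s t : CTree n} (hs : UMem s) (ht : UMem t)
    (h1 : Emb s t) (h2 : Emb t s) : s.color = t.color :=
  ColLE.antisymm (emb_colLE hs h2) (emb_colLE ht h1)

lemma mono_root_fix {s t : CTree n} (ht : UMem t) {f : s.toModel.W → t.toModel.W}
    (hf : Monotonic s.toModel t.toModel f) (hc : s.color = t.color) :
    f s.root = t.root := by
  have hcol : colAt t (f s.root).1 (f s.root).2 = s.color := colAt_of_mono hf s.root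
  by_cases hnil : (f s.root).1 = []
  · exact Subtype.ext hnil
  · exfalso
    have := colAt_strict ht (f s.root).2 hnil
    rw [hcol, hc] at this
    exact this.irrefl

/-- key decomposition: a monotonic map between universal-style trees with equal root
colors maps each child subtree into some child subtree -/
lemma emb_children {c : Col n} {ts us : List (CTree n)}
    (hs : UMem (CTree.node c ts)) (ht : UMem (CTree.node c us))
    (h : Emb (CTree.node c ts) (CTree.node c us)) :
    ∀ u ∈ ts, ∃ v ∈ us, Emb u v := by
  obtain ⟨f, hf⟩ := h
  have hroot : f (CTree.node c ts).root = (CTree.node c us).root :=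
    mono_root_fix ht hf rfl
  intro u hu
  obtain ⟨i, hi, rfl⟩ := List.getElem_of_mem hu
  set u := ts[i]'hi with hudef
  have hposi : (CTree.node c ts).Pos [i] := pos_cons_of hi (pos_nil u)
  -- the image of the child root is not the root
  have hcolu : colAt (CTree.node c us) (f ⟨[i], hposi⟩).1 (f ⟨[i], hposi⟩).2 = u.color := by
    rw [colAt_of_mono hf ⟨[i], hposi⟩]
    exact colAt_congr hposi (pos_nil u) (subt_cons_eq (List.getElem?_eq_getElem hi) [])
  have hcu : ColLT c u.color := hs.colLT u (List.getElem_mem _) [] u rfl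
  rcases hfi : (f ⟨[i], hposi⟩).1 with _ | ⟨j, m⟩
  · exfalso
    have : colAt (CTree.node c us) (f ⟨[i], hposi⟩).1 (f ⟨[i], hposi⟩).2 = c :=
      colAt_eq_color_of_nil hfi
    rw [this] at hcolu
    exact hcu.2 hcolu
  · have hpj : (CTree.node c us).Pos (j :: m) := hfi ▸ (f ⟨[i], hposi⟩).2
    have hj := pos_cons_lt hpj
    refine ⟨us[j]'hj, List.getElem_mem _, ?_⟩
    -- build the map from u into us[j]
    have key : ∀ (l : List ℕ) (hl : u.Pos l),
        (f ⟨i :: l, pos_cons_of hi hl⟩).1 = j :: (f ⟨i :: l, pos_cons_of hi hl⟩).1.tail := by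
      intro l hl
      have hpre : (f ⟨[i], hposi⟩).1 <+: (f ⟨i :: l, pos_cons_of hi hl⟩).1 :=
        hf.1 _ _ (List.cons_prefix_cons.mpr ⟨rfl, List.nil_prefix⟩)
      rw [hfi] at hpre
      obtain ⟨r, hr⟩ := hpre
      rw [← hr]; rfl
    have keypos : ∀ (l : List ℕ) (hl : u.Pos l),
        (us[j]'hj).Pos (f ⟨i :: l, pos_cons_of hi hl⟩).1.tail := by
      intro l hl
      have := (f ⟨i :: l, pos_cons_of hi hl⟩).2
      have h2 : (CTree.node c us).Pos (j :: (f ⟨i :: l, pos_cons_of hi hl⟩).1.tail) := by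
        rw [← key l hl]; exact this
      exact pos_cons_pos h2
    refine ⟨fun w => ⟨(f ⟨i :: w.1, pos_cons_of hi w.2⟩).1.tail, keypos w.1 w.2⟩, ?_, ?_⟩
    · rintro ⟨l1, h1⟩ ⟨l2, h2⟩ hR
      have : (f ⟨i :: l1, pos_cons_of hi h1⟩).1 <+: (f ⟨i :: l2, pos_cons_of hi h2⟩).1 :=
        hf.1 ⟨i :: l1, pos_cons_of hi h1⟩ ⟨i :: l2, pos_cons_of hi h2⟩
          (List.cons_prefix_cons.mpr ⟨rfl, hR⟩)
      rw [key l1 h1, key l2 h2] at this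
      exact (List.cons_prefix_cons.mp this).2
    · rintro ⟨l, hl⟩ p
      obtain ⟨m', hm'⟩ : ∃ m', (f ⟨i :: l, pos_cons_of hi hl⟩).1 = j :: m' :=
        ⟨_, key l hl⟩
      have ht1 : (f ⟨i :: l, pos_cons_of hi hl⟩).1.tail = m' := by rw [hm']; rfl
      have hpm' : (us[j]'hj).Pos m' := ht1 ▸ keypos l hl
      have e0 : (⟨(f ⟨i :: l, pos_cons_of hi hl⟩).1.tail, keypos l hl⟩ :
          (us[j]'hj).toModel.W) = ⟨m', hpm'⟩ := Subtype.ext ht1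
      show (us[j]'hj).toModel.V ⟨(f ⟨i :: l, pos_cons_of hi hl⟩).1.tail, keypos l hl⟩ p = _
      rw [e0]
      have hjm : (CTree.node c us).Pos (j :: m') := by
        rw [← hm']; exact (f ⟨i :: l, pos_cons_of hi hl⟩).2
      rw [← V_pos_cons hj hpm' hjm p]
      have e2 : (⟨j :: m', hjm⟩ : (CTree.node c us).toModel.W)
          = f ⟨i :: l, pos_cons_of hi hl⟩ := Subtype.ext hm'.symm
      rw [e2, hf.2 ⟨i :: l, pos_cons_of hi hl⟩ p, V_pos_cons hi hl]

/-- two lists strictly sorted by code with the same members are equal -/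
lemma sorted_ext : ∀ (l m : List (CTree n)),
    List.Pairwise (fun a b => CTree.code a < CTree.code b) l →
    List.Pairwise (fun a b => CTree.code a < CTree.code b) m →
    (∀ x, x ∈ l ↔ x ∈ m) → l = m
  | [], [], _, _, _ => rfl
  | [], b :: m, _, _, hmem => absurd ((hmem b).mpr List.mem_cons_self) List.not_mem_nil
  | a :: l, [], _, _, hmem => absurd ((hmem a).mp List.mem_cons_self) List.not_mem_nil
  | a :: l, b :: m, hl, hm, hmem => by
    have hab : a = b := by
      have ha : a ∈ b :: m := (hmem a).mp List.mem_cons_self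
      have hb : b ∈ a :: l := (hmem b).mpr List.mem_cons_self
      rcases List.mem_cons.mp ha with h1 | h1
      · exact h1
      · rcases List.mem_cons.mp hb with h2 | h2
        · exact h2.symm
        · have c1 := (List.pairwise_cons.mp hm).1 a h1
          have c2 := (List.pairwise_cons.mp hl).1 b h2
          omega
    subst hab
    have : l = m := by
      apply sorted_ext l m (List.pairwise_cons.mp hl).2 (List.pairwise_cons.mp hm).2
      intro x
      constructor
      · intro hx
        have hxa : CTree.code a < CTree.code x := (List.pairwise_cons.mp hl).1 x hx
        rcases List.mem_cons.mp ((hmem x).mp (List.mem_cons.mpr (Or.inr hx))) with h1 | h1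
        · subst h1; omega
        · exact h1
      · intro hx
        have hxa : CTree.code a < CTree.code x := (List.pairwise_cons.mp hm).1 x hx
        rcases List.mem_cons.mp ((hmem x).mpr (List.mem_cons.mpr (Or.inr hx))) with h1 | h1
        · subst h1; omega
        · exact h1
    rw [this]

lemma chain'_code_pairwise {l : List (CTree n)}
    (h : List.Chain' (fun a b => CTree.code a < CTree.code b) l) :
    List.Pairwise (fun a b => CTree.code a < CTree.code b) l := by
  have : IsTrans (CTree n) (fun a b => CTree.code a < CTree.code b) :=
    ⟨fun _ _ _ h1 h2 => Nat.lt_trans h1 h2⟩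
  exact List.isChain_iff_pairwise.mp h

/-- rigidity: distinct trees of the universal model are not mutually embeddable -/
lemma umem_rigid_aux : ∀ (N : ℕ) (s t : CTree n), sizeOf s ≤ N →
    UMem s → UMem t → Emb s t → Emb t s → s = t := by
  intro N
  induction N with
  | zero =>
    intro s t hsz _ _ _ _
    obtain ⟨c, ts⟩ := s
    simp only [CTree.node.sizeOf_spec] at hsz
    exact absurd hsz (by omega)
  | succ N ih =>
    intro s t hsz hs ht h1 h2
    obtain ⟨c, ts⟩ := s
    obtain ⟨d, us⟩ := t
    have hcd : c = d := emb_color_eq hs ht h1 h2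
    subst hcd
    have H1 := emb_children hs ht h1
    have H2 := emb_children ht hs h2
    have hsize : ∀ u ∈ ts, sizeOf u ≤ N := by
      intro u hu
      have := List.sizeOf_lt_of_mem hu
      simp only [CTree.node.sizeOf_spec] at hsz
      omega
    have sub1 : ∀ u ∈ ts, u ∈ us := by
      intro u hu
      obtain ⟨v, hv, e1⟩ := H1 u hu
      obtain ⟨u', hu', e2⟩ := H2 v hv
      have huu' : u = u' := by
        by_contra hne
        exact hs.antichain u' hu' u hu (Ne.symm hne) (e1.trans e2)
      subst huu'
      have : u = v := ih u v (hsize u hu) (hs.children_mem u hu) (ht.children_mem v hv) e1 e2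
      exact this ▸ hv
    have sub2 : ∀ v ∈ us, v ∈ ts := by
      intro v hv
      obtain ⟨u, hu, e2⟩ := H2 v hv
      obtain ⟨v', hv', e1⟩ := H1 u hu
      have hvv' : v = v' := by
        by_contra hne
        exact ht.antichain v' hv' v hv (Ne.symm hne) (e2.trans e1)
      subst hvv'
      have : u = v := ih u v (hsize u hu) (hs.children_mem u hu) (ht.children_mem v hv) e1 e2
      exact this ▸ hu
    have : ts = us := sorted_ext ts us (chain'_code_pairwise hs.chain)
      (chain'_code_pairwise ht.chain) (fun x => ⟨sub1 x, sub2 x⟩)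
    rw [this]

lemma umem_rigid {s t : CTree n} (hs : UMem s) (ht : UMem t)
    (h1 : Emb s t) (h2 : Emb t s) : s = t :=
  umem_rigid_aux (sizeOf s) s t le_rfl hs ht h1 h2

/-! ### Injectivity of the codes -/

lemma colCode_lt : ∀ {m : ℕ} (c : Col m), CTree.colCode c < 2 ^ m := by
  intro m
  induction m with
  | zero => intro c; simp [CTree.colCode]
  | succ m ih =>
    intro c
    rw [CTree.colCode, Fin.sum_univ_castSucc]
    have h1 := ih (fun i => c i.castSucc)
    rw [CTree.colCode] at h1
    have h2 : (if c (Fin.last m) then 2 ^ ((Fin.last m : Fin (m+1)) : ℕ) else 0) ≤ 2 ^ m := by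
      split
      · simp [Fin.val_last]
      · positivity
    have h3 : (2:ℕ) ^ (m+1) = 2 ^ m + 2 ^ m := by ring
    simp only [Fin.coe_castSucc] at h1 ⊢
    omega

lemma colCode_inj : ∀ {m : ℕ} (c d : Col m), CTree.colCode c = CTree.colCode d → c = d := by
  intro m
  induction m with
  | zero => intro c d _; funext i; exact Fin.elim0 i
  | succ m ih =>
    intro c d h
    rw [CTree.colCode, CTree.colCode, Fin.sum_univ_castSucc, Fin.sum_univ_castSucc] at h
    simp only [Fin.coe_castSucc] at h
    have hc := colCode_lt (fun i => c i.castSucc)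
    have hd := colCode_lt (fun i => d i.castSucc)
    rw [CTree.colCode] at hc hd
    have hlast : c (Fin.last m) = d (Fin.last m) := by
      by_contra hne
      rcases Bool.eq_false_or_eq_true (c (Fin.last m)) with h1 | h1 <;>
        rcases Bool.eq_false_or_eq_true (d (Fin.last m)) with h2 | h2 <;>
          simp [h1, h2, Fin.val_last] at h hne <;> omega
    have hrest : (fun i : Fin m => c i.castSucc) = (fun i : Fin m => d i.castSucc) := by
      apply ih
      rw [CTree.colCode, CTree.colCode]
      rw [hlast] at h
      split at h <;> omega
    funext i
    induction i using Fin.lastCases with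
    | last => exact hlast
    | cast i => exact congrFun hrest i

lemma listCode_inj : ∀ (l m : List ℕ), CTree.listCode l = CTree.listCode m → l = m
  | [], [], _ => rfl
  | [], b :: m, h => by simp [CTree.listCode] at h
  | a :: l, [], h => by simp [CTree.listCode] at h
  | a :: l, b :: m, h => by
    simp only [CTree.listCode, Nat.add_right_cancel_iff] at h
    have h1 := congrArg Nat.unpair h
    simp only [Nat.unpair_pair] at h1
    obtain ⟨h2, h3⟩ := Prod.mk.injEq _ _ _ _ ▸ h1
    rw [h2, listCode_inj l m h3]

lemma code_inj_aux : ∀ (N : ℕ) (s t : CTree n), sizeOf s ≤ N →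
    CTree.code s = CTree.code t → s = t := by
  intro N
  induction N with
  | zero =>
    intro s t hsz
    obtain ⟨c, ts⟩ := s
    simp only [CTree.node.sizeOf_spec] at hsz
    exact absurd hsz (by omega)
  | succ N ih =>
    intro s t hsz h
    obtain ⟨c, ts⟩ := s
    obtain ⟨d, us⟩ := t
    rw [CTree.code, CTree.code] at h
    have h1 := congrArg Nat.unpair h
    simp only [Nat.unpair_pair] at h1
    obtain ⟨h2, h3⟩ := Prod.mk.injEq _ _ _ _ ▸ h1
    have hc : c = d := colCode_inj c d h2
    have hmap : ts.map CTree.code = us.map CTree.code := by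
      have e1 : ts.attach.map (fun x => CTree.code x.1) = ts.map CTree.code :=
        List.attach_map_val (l := ts) (f := CTree.code)
      have e2 : us.attach.map (fun x => CTree.code x.1) = us.map CTree.code :=
        List.attach_map_val (l := us) (f := CTree.code)
      rw [← e1, ← e2]
      exact listCode_inj _ _ h3
    have hsize : ∀ u ∈ ts, sizeOf u ≤ N := by
      intro u hu
      have := List.sizeOf_lt_of_mem hu
      simp only [CTree.node.sizeOf_spec] at hsz
      omega
    have : ts = us := by
      clear h h1 h3 hsz
      induction ts generalizing us with
      | nil => cases us with
        | nil => rfl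
        | cons b us => simp at hmap
      | cons a ts iht => cases us with
        | nil => simp at hmap
        | cons b us =>
          simp only [List.map_cons, List.cons.injEq] at hmap
          have hab : a = b := ih a b (hsize a List.mem_cons_self) hmap.1
          rw [hab, iht us hmap.2 (fun u hu => hsize u (List.mem_cons_of_mem _ hu))]
    rw [hc, this]

lemma code_inj {s t : CTree n} (h : CTree.code s = CTree.code t) : s = t :=
  code_inj_aux (sizeOf s) s t le_rfl h

/-! ### Selecting a maximal antichain from a list of universal trees -/

open Classical in
/-- the trees of `L` that are maximal in `L` w.r.t. embeddability, without
duplicates, sorted by code -/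
noncomputable def select (L : List (CTree n)) : List (CTree n) :=
  letI := Classical.decEq (CTree n)
  ((L.dedup.filter (fun t => decide (∀ u ∈ L, Emb t u → u = t))).mergeSort
    (fun a b => CTree.code a ≤ CTree.code b))

lemma select_mem {L : List (CTree n)} {x : CTree n} (hx : x ∈ select L) :
    x ∈ L ∧ ∀ u ∈ L, Emb x u → u = x := by
  classical
  have h1 := (List.mergeSort_perm _ _).mem_iff.mp hx
  have h2 := List.mem_filter.mp h1
  refine ⟨List.mem_dedup.mp h2.1, ?_⟩
  have := of_decide_eq_true h2.2
  exact this

lemma select_nodup (L : List (CTree n)) : (select L).Nodup := by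
  classical
  exact (List.mergeSort_perm _ _).nodup_iff.mpr ((List.nodup_dedup L).filter _)

lemma select_chain (L : List (CTree n)) :
    List.Chain' (fun a b => CTree.code a < CTree.code b) (select L) := by
  classical
  apply List.Pairwise.isChain
  have hs : List.Pairwise (fun a b => (CTree.code a ≤ CTree.code b)) (select L) := by
    have := List.pairwise_mergeSort (le := fun a b : CTree n => decide (CTree.code a ≤ CTree.code b))
      (fun a b c h1 h2 => by
        simp only [decide_eq_true_eq] at *; omega)
      (fun a b => by
        simp only [Bool.or_eq_true, decide_eq_true_eq]; omega)
      (L.dedup.filter (fun t => decide (∀ u ∈ L, Emb t u → u = t)))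
    refine this.imp ?_
    intro a b h; exact of_decide_eq_true h
  have hne := select_nodup L
  refine (hs.and hne).imp ?_
  rintro a b ⟨h1, h2⟩
  rcases Nat.lt_or_ge (CTree.code a) (CTree.code b) with h | h
  · exact h
  · exact absurd (code_inj (Nat.le_antisymm h1 h)) h2

lemma select_antichain (L : List (CTree n)) :
    ∀ t ∈ select L, ∀ s ∈ select L, t ≠ s → ¬ MLE t s := by
  intro t ht s hs hne hmle
  -- MLE t s : there is a monotonic map from s into t, i.e. Emb s t
  have h1 : Emb s t := hmle
  have := (select_mem hs).2 t (select_mem ht).1 h1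
  exact hne this

lemma exists_max_above {L : List (CTree n)}
    (hanti : ∀ a ∈ L, ∀ b ∈ L, Emb a b → Emb b a → a = b) :
    ∀ x ∈ L, ∃ m ∈ L, (∀ u ∈ L, Emb m u → u = m) ∧ Emb x m := by
  classical
  suffices H : ∀ k, ∀ x ∈ L, (L.toFinset.filter (fun u => Emb x u)).card ≤ k →
      ∃ m ∈ L, (∀ u ∈ L, Emb m u → u = m) ∧ Emb x m by
    exact fun x hx => H _ x hx le_rfl
  intro k
  induction k with
  | zero =>
    intro x hx hc
    exfalso
    have : x ∈ L.toFinset.filter (fun u => Emb x u) := by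
      simp only [Finset.mem_filter, List.mem_toFinset]
      exact ⟨hx, Emb.refl x⟩
    have := Finset.card_pos.mpr ⟨x, this⟩
    omega
  | succ k ih =>
    intro x hx hc
    by_cases hmax : ∀ u ∈ L, Emb x u → u = x
    · exact ⟨x, hx, hmax, Emb.refl x⟩
    · push_neg at hmax
      obtain ⟨y, hyL, hxy, hyx⟩ := hmax
      have hssub : L.toFinset.filter (fun u => Emb y u) ⊂ L.toFinset.filter (fun u => Emb x u) := by
        constructor
        · intro u hu
          simp only [Finset.mem_filter, List.mem_toFinset] at hu ⊢
          exact ⟨hu.1, hxy.trans hu.2⟩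
        · intro hsub
          have : x ∈ L.toFinset.filter (fun u => Emb y u) := by
            apply hsub
            simp only [Finset.mem_filter, List.mem_toFinset]
            exact ⟨hx, Emb.refl x⟩
          simp only [Finset.mem_filter, List.mem_toFinset] at this
          exact hyx (hanti y hyL x hx this.2 hxy ▸ rfl)
      have hcard := Finset.card_lt_card hssub
      obtain ⟨m, hm, hmmax, hym⟩ := ih y hyL (by omega)
      exact ⟨m, hm, hmmax, hxy.trans hym⟩

lemma select_above {L : List (CTree n)}
    (hanti : ∀ a ∈ L, ∀ b ∈ L, Emb a b → Emb b a → a = b) :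
    ∀ x ∈ L, ∃ k ∈ select L, Emb x k := by
  classical
  intro x hx
  obtain ⟨m, hm, hmmax, hxm⟩ := exists_max_above hanti x hx
  refine ⟨m, ?_, hxm⟩
  apply (List.mergeSort_perm _ _).mem_iff.mpr
  apply List.mem_filter.mpr
  exact ⟨List.mem_dedup.mpr hm, decide_eq_true hmmax⟩

lemma select_ne_nil {L : List (CTree n)}
    (hanti : ∀ a ∈ L, ∀ b ∈ L, Emb a b → Emb b a → a = b) (hL : L ≠ []) :
    select L ≠ [] := by
  obtain ⟨x, hx⟩ := List.exists_mem_of_ne_nil L hL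
  obtain ⟨k, hk, _⟩ := select_above hanti x hx
  exact List.ne_nil_of_mem hk

/-! ### Normalization of persistent trees -/

/-- persistent trees: colors do not decrease from a node to its children -/
inductive Pers : {n : ℕ} → CTree n → Prop
  | mk {n : ℕ} (c : Col n) (ts : List (CTree n)) :
      (∀ t ∈ ts, ColLE c t.color) → (∀ t ∈ ts, Pers t) → Pers (CTree.node c ts)

lemma Pers.children {c : Col n} {ts : List (CTree n)} (h : Pers (CTree.node c ts)) :
    ∀ t ∈ ts, Pers t := by cases h with | mk _ _ _ h2 => exact h2

lemma Pers.colLE {c : Col n} {ts : List (CTree n)} (h : Pers (CTree.node c ts)) :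
    ∀ t ∈ ts, ColLE c t.color := by cases h with | mk _ _ h1 _ => exact h1

open Classical in
/-- normalization of a tree into a member of the universal model -/
noncomputable def norm : CTree n → CTree n
  | CTree.node c ts =>
      CTree.node c (select ((ts.attach.map (fun x => norm x.1)).flatMap
        (fun s => if s.color = c then s.children else [s])))
decreasing_by
  have := List.sizeOf_lt_of_mem x.2
  simp only [CTree.node.sizeOf_spec]
  omega

lemma norm_eq (c : Col n) (ts : List (CTree n)) :
    norm (CTree.node c ts) =
      CTree.node c (select ((ts.map norm).flatMap
        (fun s => if s.color = c then s.children else [s]))) := by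
  unfold _root_.norm
  rw [List.attach_map_val (l := ts) (f := _root_.norm)]

lemma norm_color (t : CTree n) : (norm t).color = t.color := by
  obtain ⟨c, ts⟩ := t
  rw [norm_eq]
  rfl

lemma umem_subt_colLE {u : CTree n} (hu : UMem u) {l : List ℕ} {s : CTree n}
    (h : CTree.subt l u = some s) : ColLE u.color s.color := by
  have hp : u.Pos l := by unfold CTree.Pos; rw [h]; rfl
  have hcol : CTree.colAt u l hp = s.color := by
    unfold CTree.colAt
    exact congrArg CTree.color (Option.get_of_mem hp h)
  match l with
  | [] =>
    have : s = u := by rw [CTree.subt_nil] at h; exact (Option.some_injective _ h).symm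
    rw [this]; exact ColLE.refl _
  | i :: l' => exact hcol ▸ (CTree.colAt_strict hu hp (by simp)).1

/-- main normalization theorem -/
theorem norm_main : ∀ (N : ℕ) (t : CTree n), sizeOf t ≤ N → Pers t →
    UMem (norm t) ∧ REmb t (norm t) ∧ REmb (norm t) t := by
  intro N
  induction N with
  | zero =>
    intro t hsz
    obtain ⟨c, ts⟩ := t
    simp only [CTree.node.sizeOf_spec] at hsz
    exact absurd hsz (by omega)
  | succ N ih =>
    intro t hsz hp
    obtain ⟨c, ts⟩ := t
    have hsize : ∀ u ∈ ts, sizeOf u ≤ N := by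
      intro u hu
      have := List.sizeOf_lt_of_mem hu
      simp only [CTree.node.sizeOf_spec] at hsz
      omega
    set F := (ts.map norm).flatMap (fun s => if s.color = c then s.children else [s]) with hF
    -- membership in F
    have memF : ∀ u, u ∈ F ↔ ∃ t₀ ∈ ts, u ∈ (if (norm t₀).color = c
        then (norm t₀).children else [norm t₀]) := by
      intro u
      rw [hF, List.mem_flatMap]
      constructor
      · rintro ⟨s, hs, hu⟩
        obtain ⟨t₀, ht₀, rfl⟩ := List.mem_map.mp hs
        exact ⟨t₀, ht₀, hu⟩
      · rintro ⟨t₀, ht₀, hu⟩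
        exact ⟨norm t₀, List.mem_map.mpr ⟨t₀, ht₀, rfl⟩, hu⟩
    -- every member of F is in the universal model
    have umemF : ∀ u ∈ F, UMem u := by
      intro u hu
      obtain ⟨t₀, ht₀, hu⟩ := (memF u).mp hu
      have hn : UMem (norm t₀) := (ih t₀ (hsize t₀ ht₀) (hp.children t₀ ht₀)).1
      split at hu
      · have := hn
        rw [CTree.eta (norm t₀)] at this
        exact this.children_mem u hu
      · rw [List.mem_singleton] at hu
        rw [hu]; exact hn
    have hanti : ∀ a ∈ F, ∀ b ∈ F, Emb a b → Emb b a → a = b := by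
      intro a ha b hb h1 h2
      exact umem_rigid (umemF a ha) (umemF b hb) h1 h2
    -- the strict color bound for members of F and their subtrees
    have hcolF : ∀ u ∈ F, ∀ (l : List ℕ) (s : CTree n),
        CTree.subt l u = some s → ColLT c s.color := by
      intro u hu l s hsub
      obtain ⟨t₀, ht₀, hu⟩ := (memF u).mp hu
      have hn : UMem (norm t₀) := (ih t₀ (hsize t₀ ht₀) (hp.children t₀ ht₀)).1
      split at hu
      · next heq =>
        -- u is a child of norm t₀, which has root color c
        have := hn
        rw [CTree.eta (norm t₀), heq] at this
        exact this.colLT u hu l s hsub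
      · next hne =>
        rw [List.mem_singleton] at hu
        subst hu
        have hle : ColLE c (_root_.norm t₀).color := by
          rw [norm_color]
          exact hp.colLE t₀ ht₀
        have hlt : ColLT c (_root_.norm t₀).color := ⟨hle, fun h => hne h.symm⟩
        exact hlt.trans_le (umem_subt_colLE hn hsub)
    -- UMem (norm t)
    have humem : UMem (norm (CTree.node c ts)) := by
      rw [norm_eq]
      by_cases hFnil : F = []
      · have hsel : select F = [] := by
          refine List.eq_nil_iff_forall_not_mem.mpr (fun x hx => ?_)
          have := (select_mem hx).1
          rw [hFnil] at this
          exact List.not_mem_nil this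
        rw [← hF, hsel]
        exact UMem.single c
      · rw [← hF]
        refine UMem.step c (select F) (select_ne_nil hanti hFnil) ?_
          (select_chain F) (select_antichain F) ?_
        · exact fun u hu => umemF u (select_mem hu).1
        · exact fun u hu l s hsub => hcolF u (select_mem hu).1 l s hsub
    refine ⟨humem, ?_, ?_⟩
    · -- REmb (node c ts) (norm (node c ts))
      rw [norm_eq, ← hF]
      apply embGlue
      intro u hu
      have hremb := (ih u (hsize u hu) (hp.children u hu)).2.1
      refine hremb.emb.trans ?_
      by_cases heq : (norm u).color = c
      · -- glue the children of norm u into node c (select F)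
        have : REmb (CTree.node c (norm u).children) (CTree.node c (select F)) := by
          apply embGlue
          intro v hv
          have hvF : v ∈ F := (memF v).mpr ⟨u, hu, by rw [if_pos heq]; exact hv⟩
          obtain ⟨k, hk, hvk⟩ := select_above hanti v hvF
          exact hvk.trans (embChild hk)
        have heta : norm u = CTree.node c (norm u).children := by
          conv_lhs => rw [CTree.eta (norm u)]
          rw [heq]
        rw [heta]
        exact this.emb
      · have hvF : norm u ∈ F := (memF (norm u)).mpr
          ⟨u, hu, by rw [if_neg heq]; exact List.mem_singleton_self _⟩
        obtain ⟨k, hk, hvk⟩ := select_above hanti (norm u) hvF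
        exact hvk.trans (embChild hk)
    · -- REmb (norm (node c ts)) (node c ts)
      rw [norm_eq, ← hF]
      apply embGlue
      intro k hk
      have hkF : k ∈ F := (select_mem hk).1
      obtain ⟨t₀, ht₀, hkmem⟩ := (memF k).mp hkF
      have hremb := (ih t₀ (hsize t₀ ht₀) (hp.children t₀ ht₀)).2.2
      split at hkmem
      · next heq =>
        have h1 : Emb k (norm t₀) := by
          have heta : norm t₀ = CTree.node c (norm t₀).children := by
            conv_lhs => rw [CTree.eta (norm t₀)]
            rw [heq]
          rw [heta]
          exact embChild hkmem
        exact (h1.trans hremb.emb).trans (embChild ht₀)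
      · rw [List.mem_singleton] at hkmem
        subst hkmem
        exact hremb.emb.trans (embChild ht₀)

/-! ### From finite tree-like models to colored trees -/

section OfModel

variable (M : KStruct) [Fintype M.W]

open Classical in
/-- the strict up-set of a point -/
noncomputable def upset (w : M.W) : Finset M.W := Finset.univ.filter (fun v => M.R w v)

open Classical in
/-- the strict predecessors of a point -/
noncomputable def sPred (w : M.W) : Finset M.W :=
  Finset.univ.filter (fun u => M.R u w ∧ u ≠ w)

lemma mem_upset {w v : M.W} : v ∈ upset M w ↔ M.R w v := by
  classical
  simp [upset]

lemma mem_sPred {w u : M.W} : u ∈ sPred M w ↔ M.R u w ∧ u ≠ w := by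
  classical
  simp [sPred]

lemma mem_immSuccList {w u : M.W} : u ∈ immSuccList M w ↔ ImmSucc M w u := by
  classical
  simp [immSuccList]

lemma upset_card_lt (hM : M.IsModel) {w u : M.W} (h : ImmSucc M w u) :
    (upset M u).card < (upset M w).card := by
  apply Finset.card_lt_card
  constructor
  · intro v hv
    rw [mem_upset] at hv ⊢
    exact hM.2.1 w u v h.1 hv
  · intro hsub
    have hw : w ∈ upset M w := mem_upset M |>.mpr (hM.1 w)
    have := hsub hw
    rw [mem_upset] at this
    exact h.2.1 (hM.2.2.1 w u h.1 this)


open Classical in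
/-- the colored tree of a finite model below a point -/
noncomputable def ct (hM : M.IsModel) (w : M.W) : CTree n :=
  CTree.node (fun i => M.V w i.1)
    ((immSuccList M w).attach.map (fun x => ct hM x.1))
termination_by (upset M w).card
decreasing_by
  exact upset_card_lt M hM (mem_immSuccList M |>.mp x.2)

lemma ct_eq (hM : M.IsModel) (w : M.W) :
    ct M hM (n := n) w = CTree.node (fun i => M.V w i.1)
      ((immSuccList M w).map (ct M hM)) := by
  unfold ct
  rw [List.attach_map_val]

lemma ct_color (hM : M.IsModel) (w : M.W) : (ct M hM (n := n) w).color = fun i => M.V w i.1 := by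
  rw [ct_eq]; rfl

/-- navigation in the model along positions -/
noncomputable def atPos : M.W → List ℕ → Option M.W
  | w, [] => some w
  | w, i :: l =>
      match (immSuccList M w)[i]? with
      | some u => atPos u l
      | none => none

lemma subt_ct (hM : M.IsModel) : ∀ (l : List ℕ) (w : M.W),
    CTree.subt l (ct M hM (n := n) w) = (atPos M w l).map (ct M hM) := by
  intro l
  induction l with
  | nil => intro w; rfl
  | cons i l ihl =>
    intro w
    rw [ct_eq]
    rw [CTree.subt_cons]
    show ((List.map (ct M hM) (immSuccList M w))[i]?).bind (CTree.subt l) = _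
    rw [List.getElem?_map]
    cases h : (immSuccList M w)[i]? with
    | none => simp [atPos, h]
    | some u =>
      simp only [Option.map_some, Option.bind_some]
      rw [ihl u]
      simp [atPos, h]

lemma atPos_cons (w : M.W) (i : ℕ) (l : List ℕ) :
    atPos M w (i :: l) = match (immSuccList M w)[i]? with
      | some u => atPos M u l
      | none => none := rfl

lemma atPos_append (l m : List ℕ) : ∀ (w : M.W),
    atPos M w (l ++ m) = (atPos M w l).bind (fun u => atPos M u m) := by
  induction l with
  | nil => intro w; rfl
  | cons i l ihl =>
    intro w
    show atPos M w (i :: (l ++ m)) = (atPos M w (i :: l)).bind (fun u => atPos M u m)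
    rw [atPos_cons, atPos_cons]
    cases h : (immSuccList M w)[i]? with
    | none => rfl
    | some u => exact ihl u

lemma atPos_R (hM : M.IsModel) : ∀ (l : List ℕ) (w v : M.W), atPos M w l = some v → M.R w v := by
  intro l
  induction l with
  | nil =>
    intro w v h
    cases h
    exact hM.1 w
  | cons i l ihl =>
    intro w v h
    rw [atPos_cons] at h
    cases hg : (immSuccList M w)[i]? with
    | none => rw [hg] at h; cases h
    | some u =>
      rw [hg] at h
      have hmem : u ∈ immSuccList M w := by
        obtain ⟨hlt, rfl⟩ := List.getElem?_eq_some_iff.mp hg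
        exact List.getElem_mem _
      have h1 : M.R w u := ((mem_immSuccList M).mp hmem).1
      exact hM.2.1 w u v h1 (ihl u v h)


/-- existence of a greatest element in a finite nonempty chain -/
lemma finset_exists_greatest (hM : M.IsModel) (S : Finset M.W) (hne : S.Nonempty)
    (htot : ∀ a ∈ S, ∀ b ∈ S, M.R a b ∨ M.R b a) :
    ∃ m ∈ S, ∀ a ∈ S, M.R a m := by
  classical
  induction S using Finset.induction_on with
  | empty => exact absurd hne (by simp)
  | @insert a s ha ih =>
    rcases s.eq_empty_or_nonempty with rfl | hsne
    · refine ⟨a, Finset.mem_insert_self a _, ?_⟩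
      intro b hb
      rw [Finset.mem_insert] at hb
      rcases hb with rfl | hb
      · rcases htot b (Finset.mem_insert_self b _) b (Finset.mem_insert_self b _) with h | h
        · exact h
        · exact h
      · exact absurd hb (by simp)
    · obtain ⟨m, hm, hmax⟩ := ih hsne
        (fun x hx y hy => htot x (Finset.mem_insert_of_mem hx) y (Finset.mem_insert_of_mem hy))
      rcases htot a (Finset.mem_insert_self a _) m (Finset.mem_insert_of_mem hm) with h | h
      · refine ⟨m, Finset.mem_insert_of_mem hm, ?_⟩
        intro b hb
        rw [Finset.mem_insert] at hb
        rcases hb with rfl | hb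
        · exact h
        · exact hmax b hb
      · refine ⟨a, Finset.mem_insert_self a _, ?_⟩
        intro b hb
        rw [Finset.mem_insert] at hb
        rcases hb with rfl | hb
        · rcases htot b (Finset.mem_insert_self b _) b (Finset.mem_insert_self b _) with h' | h'
          · exact h'
          · exact h'
        · exact hM.2.1 _ _ _ (hmax b hb) h

variable (hM : M.IsModel) (r : M.W) (htree : IsTree M r)

include hM htree in
lemma sPred_greatest (w : M.W) (hw : w ≠ r) :
    ∃ m ∈ sPred M w, ∀ a ∈ sPred M w, M.R a m := by
  apply finset_exists_greatest M hM
  · exact ⟨r, (mem_sPred M).mpr ⟨htree.1 w, fun h => hw h.symm⟩⟩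
  · intro a ha b hb
    rw [mem_sPred] at ha hb
    exact htree.2.2 w a b ha.1 hb.1

/-- the immediate predecessor of a non-root point -/
noncomputable def maxPred (w : M.W) (hw : w ≠ r) : M.W :=
  (sPred_greatest M hM r htree w hw).choose

lemma maxPred_spec (w : M.W) (hw : w ≠ r) :
    maxPred M hM r htree w hw ∈ sPred M w ∧
      ∀ a ∈ sPred M w, M.R a (maxPred M hM r htree w hw) :=
  ⟨(sPred_greatest M hM r htree w hw).choose_spec.1,
    (sPred_greatest M hM r htree w hw).choose_spec.2⟩

include hM htree in
lemma maxPred_immSucc (w : M.W) (hw : w ≠ r) :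
    ImmSucc M (maxPred M hM r htree w hw) w := by
  obtain ⟨hmem, hmax⟩ := maxPred_spec M hM r htree w hw
  rw [mem_sPred] at hmem
  refine ⟨hmem.1, hmem.2, ?_⟩
  intro v h1 h2
  by_cases hvw : v = w
  · exact Or.inr hvw
  · left
    have hv : v ∈ sPred M w := (mem_sPred M).mpr ⟨h2, hvw⟩
    exact hM.2.2.1 _ _ (hmax v hv) h1

include hM htree in
lemma maxPred_card (w : M.W) (hw : w ≠ r) :
    (sPred M (maxPred M hM r htree w hw)).card < (sPred M w).card := by
  set m := maxPred M hM r htree w hw with hm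
  obtain ⟨hmem, _⟩ := maxPred_spec M hM r htree w hw
  rw [mem_sPred] at hmem
  apply Finset.card_lt_card
  constructor
  · intro u hu
    rw [mem_sPred] at hu ⊢
    refine ⟨hM.2.1 _ _ _ hu.1 hmem.1, ?_⟩
    intro huw
    have h1 : M.R w m := huw ▸ hu.1
    exact hmem.2 (hM.2.2.1 m w hmem.1 h1)
  · intro hsub
    have : m ∈ sPred M w := (mem_sPred M).mpr hmem
    have := hsub this
    rw [mem_sPred] at this
    exact this.2 rfl

open Classical in
/-- the position of a point in the tree of the model -/
noncomputable def pathTo (w : M.W) : List ℕ :=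
  if hw : w = r then []
  else
    pathTo (maxPred M hM r htree w hw) ++
      [(immSuccList M (maxPred M hM r htree w hw)).idxOf w]
termination_by (sPred M w).card
decreasing_by
  exact maxPred_card M hM r htree w hw

lemma pathTo_root : pathTo M hM r htree r = [] := by
  unfold pathTo
  rw [dif_pos rfl]

include hM htree in
lemma atPos_pathTo (w : M.W) : atPos M r (pathTo M hM r htree w) = some w := by
  classical
  suffices H : ∀ k w, (sPred M w).card ≤ k → atPos M r (pathTo M hM r htree w) = some w by
    exact H _ w le_rfl
  intro k
  induction k with
  | zero =>
    intro w hc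
    by_cases hw : w = r
    · subst hw; rw [pathTo_root]; rfl
    · exfalso
      have : r ∈ sPred M w := (mem_sPred M).mpr ⟨htree.1 w, fun h => hw h.symm⟩
      have := Finset.card_pos.mpr ⟨r, this⟩
      omega
  | succ k ih =>
    intro w hc
    by_cases hw : w = r
    · subst hw; rw [pathTo_root]; rfl
    · rw [pathTo]
      rw [dif_neg hw]
      set m := maxPred M hM r htree w hw with hmdef
      rw [atPos_append]
      have h1 : atPos M r (pathTo M hM r htree m) = some m := by
        apply ih
        have := maxPred_card M hM r htree w hw
        rw [← hmdef] at this
        omega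
      rw [h1]
      show atPos M m [(immSuccList M m).idxOf w] = some w
      have hmem : w ∈ immSuccList M m :=
        (mem_immSuccList M).mpr (maxPred_immSucc M hM r htree w hw)
      rw [atPos_cons, List.getElem?_eq_getElem (List.idxOf_lt_length_iff.mpr hmem),
        List.getElem_idxOf]
      rfl

include hM htree in
lemma pathTo_mono {v w : M.W} (h : M.R v w) :
    pathTo M hM r htree v <+: pathTo M hM r htree w := by
  classical
  suffices H : ∀ k w, (sPred M w).card ≤ k → ∀ v, M.R v w →
      pathTo M hM r htree v <+: pathTo M hM r htree w by
    exact H _ w le_rfl v h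
  intro k
  induction k with
  | zero =>
    intro w hc v hvw
    by_cases hvw' : v = w
    · subst hvw'; exact List.prefix_refl _
    · exfalso
      have : v ∈ sPred M w := (mem_sPred M).mpr ⟨hvw, hvw'⟩
      have := Finset.card_pos.mpr ⟨v, this⟩
      omega
  | succ k ih =>
    intro w hc v hvw
    by_cases hvw' : v = w
    · subst hvw'; exact List.prefix_refl _
    · have hw : w ≠ r := by
        intro hwr
        subst hwr
        exact hvw' (hM.2.2.1 _ _ hvw (htree.1 v))
      conv_rhs => rw [pathTo]
      rw [dif_neg hw]
      set m := maxPred M hM r htree w hw with hmdef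
      have hvm : M.R v m := by
        apply (maxPred_spec M hM r htree w hw).2
        exact (mem_sPred M).mpr ⟨hvw, hvw'⟩
      have h1 : pathTo M hM r htree v <+: pathTo M hM r htree m := by
        apply ih
        · have := maxPred_card M hM r htree w hw
          rw [← hmdef] at this
          omega
        · exact hvm
      exact h1.trans (List.prefix_append _ _)

omit htree in
include hM in
/-- persistence of the tree of a persistent model -/
lemma ct_pers (hNM : M.IsNModel n) : ∀ (w : M.W), Pers (ct M hM (n := n) w) := by
  classical
  suffices H : ∀ k (w : M.W), (upset M w).card ≤ k → Pers (ct M hM (n := n) w) by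
    exact fun w => H _ w le_rfl
  intro k
  induction k with
  | zero =>
    intro w hc
    exfalso
    have : w ∈ upset M w := (mem_upset M).mpr (hM.1 w)
    have := Finset.card_pos.mpr ⟨w, this⟩
    omega
  | succ k ih =>
    intro w hc
    rw [ct_eq]
    constructor
    · intro t ht
      obtain ⟨u, hu, rfl⟩ := List.mem_map.mp ht
      rw [ct_color]
      intro i hi
      exact hM.2.2.2 w u i.1 ((mem_immSuccList M).mp hu).1 hi
    · intro t ht
      obtain ⟨u, hu, rfl⟩ := List.mem_map.mp ht
      apply ih
      have := upset_card_lt M hM ((mem_immSuccList M).mp hu)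
      omega

end OfModel

/-! ### The maps between the model and its tree -/

section Maps

variable (M : KStruct) [Fintype M.W]

lemma isSome_atPos (hM : M.IsModel) (r : M.W) (w : (ct M hM (n := n) r).toModel.W) :
    (atPos M r w.1).isSome = true := by
  have h := w.2
  change (CTree.subt w.1 (ct M hM (n := n) r)).isSome = true at h
  rw [subt_ct M hM] at h
  cases ho : atPos M r w.1 with
  | none => rw [ho] at h; simp at h
  | some v => rfl

lemma colAt_ct (hM : M.IsModel) (r : M.W) {l : List ℕ} {w' : M.W}
    (h : atPos M r l = some w') (hp : (ct M hM (n := n) r).Pos l) :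
    CTree.colAt (ct M hM (n := n) r) l hp = fun i => M.V w' i.1 := by
  have hsub : CTree.subt l (ct M hM (n := n) r) = some (ct M hM (n := n) w') := by
    rw [subt_ct M hM, h]; rfl
  unfold CTree.colAt
  rw [show (CTree.subt l (ct M hM (n := n) r)).get hp = ct M hM (n := n) w' from
    Option.get_of_mem hp hsub]
  rw [ct_color]

lemma ct_fromMap (hM : M.IsModel) (hNM : M.IsNModel n) (r : M.W) :
    ∃ g : (ct M hM (n := n) r).toModel.W → M.W,
      Monotonic (ct M hM (n := n) r).toModel M g ∧ g (ct M hM (n := n) r).root = r := by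
  refine ⟨fun w => (atPos M r w.1).get (isSome_atPos M hM r w), ⟨?_, ?_⟩, rfl⟩
  · rintro w u hR
    obtain ⟨m, hm⟩ := hR
    set v := (atPos M r w.1).get (isSome_atPos M hM r w) with hv
    set v' := (atPos M r u.1).get (isSome_atPos M hM r u) with hv'
    have h1 : atPos M r w.1 = some v := (Option.some_get _).symm
    have h2 : atPos M r u.1 = some v' := (Option.some_get _).symm
    have h3 : atPos M r u.1 = atPos M v m := by
      rw [← hm, atPos_append, h1]
      rfl
    exact atPos_R M hM m v v' (h3 ▸ h2)
  · intro w p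
    set v := (atPos M r w.1).get (isSome_atPos M hM r w) with hv
    have h1 : atPos M r w.1 = some v := (Option.some_get _).symm
    rw [CTree.toModel_V_eq]
    split
    · next hp => exact (congrFun (colAt_ct M hM r h1 w.2) ⟨p, hp⟩).symm
    · next hp => exact hNM.2 v p (by omega)

lemma ct_toMap (hM : M.IsModel) (hNM : M.IsNModel n) (r : M.W) (htree : IsTree M r) :
    ∃ f : M.W → (ct M hM (n := n) r).toModel.W,
      Monotonic M (ct M hM (n := n) r).toModel f ∧ f r = (ct M hM (n := n) r).root := by
  have hpos : ∀ w : M.W, (ct M hM (n := n) r).Pos (pathTo M hM r htree w) := by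
    intro w
    unfold CTree.Pos
    rw [subt_ct M hM, atPos_pathTo M hM r htree w]
    rfl
  refine ⟨fun w => ⟨pathTo M hM r htree w, hpos w⟩, ⟨?_, ?_⟩, ?_⟩
  · intro w u h
    exact pathTo_mono M hM r htree h
  · intro w p
    refine (CTree.toModel_V_eq _ _ _).trans ?_
    split
    · next hp => exact congrFun (colAt_ct M hM r (atPos_pathTo M hM r htree w) _) ⟨p, hp⟩
    · next hp => exact (hNM.2 w p (by omega)).symm
  · apply Subtype.ext
    exact pathTo_root M hM r htree

end Maps

theorem tree_equiv_unique_univ_node' (n : ℕ) (M : KStruct) [Fintype M.W]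
    (hM : M.IsNModel n) (r : M.W) (htree : IsTree M r) :
    ∃ t : CTree n, UMem t ∧ MEquiv M t.toModel ∧
      (∀ s : CTree n, UMem s → MEquiv M s.toModel → s = t) ∧
      (∀ φ : Formula, MR φ → (M.sat r φ ↔ t.toModel.sat t.root φ)) := by
  have hMod : M.IsModel := hM.1
  set t0 : CTree n := ct M hMod (n := n) r with ht0
  obtain ⟨humem, re1, re2⟩ := norm_main (sizeOf t0) t0 le_rfl (ct_pers M hMod hM r)
  obtain ⟨f1, hf1, hf1r⟩ := re1
  obtain ⟨f2, hf2, hf2r⟩ := re2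
  obtain ⟨g, hg, hgr⟩ := ct_fromMap M hMod hM r
  obtain ⟨h, hh, hhr⟩ := ct_toMap M hMod hM r htree
  refine ⟨norm t0, humem, ?_, ?_, ?_⟩
  · constructor
    · exact ⟨g ∘ f2, hf2.comp hg⟩
    · exact ⟨f1 ∘ h, hh.comp hf1⟩
  · intro s hs hsEq
    obtain ⟨⟨ms, hms⟩, ⟨sm, hsm⟩⟩ := hsEq
    apply umem_rigid hs humem
    · exact ⟨(f1 ∘ h) ∘ ms, hms.comp (hh.comp hf1)⟩
    · exact ⟨sm ∘ (g ∘ f2), (hf2.comp hg).comp hsm⟩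
  · intro φ hMR
    constructor
    · intro hsat
      apply hMR (norm t0).toModel M (CTree.toModel_isModel humem) hMod (g ∘ f2)
        (hf2.comp hg) (norm t0).root
      have : (g ∘ f2) (norm t0).root = r := by
        simp only [Function.comp]
        rw [hf2r, hgr]
      rw [this]
      exact hsat
    · intro hsat
      have := hMR M (norm t0).toModel hMod (CTree.toModel_isModel humem) (f1 ∘ h)
        (hh.comp hf1) r
      apply this
      have : (f1 ∘ h) r = (norm t0).root := by
        simp only [Function.comp]
        rw [hhr, hf1r]
      rw [this]
      exact hsat

/-- every finite tree-like n-model is `≡`-equivalent to a unique node of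
`𝒯(n)`, and consequently satisfies the same MR-formulas at the root. -/
theorem tree_equiv_unique_univ_node (n : ℕ) (M : KStruct) [Fintype M.W]
    (hM : M.IsNModel n) (r : M.W) (htree : IsTree M r) :
    ∃ t : CTree n, UMem t ∧ MEquiv M t.toModel ∧
      (∀ s : CTree n, UMem s → MEquiv M s.toModel → s = t) ∧
      (∀ φ : Formula, MR φ → (M.sat r φ ↔ t.toModel.sat t.root φ)) := by
  exact tree_equiv_unique_univ_node' n M hM r htree
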